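/- arXiv:1110.1837 — 4 statements merged into one kernel-verified Lean document; each statement's English description precedes it below -/
import Mathlib

section
/- If f : ℝ → ℝ is continuous and satisfies f(v)·v ≥ -C + γ₀·|v|^{2+δ} for all v ∈ ℝ, where C ≥ 0, γ₀ > 0, δ > 0, then its antiderivative F(v) := ∫₀ᵛ f(s) ds satisfies F(v) ≥ -C₁ + γ₁·|v|^{2+δ} for all v ∈ ℝ, for some constants C₁ ≥ 0 and γ₁ > 0. -/
open MeasureTheory intervalIntegral

lemma aux0 (f : ℝ → ℝ) (hf : Continuous f)
    (C γ₀ δ : ℝ) (hC : 0 ≤ C) (hγ₀ : 0 < γ₀) (hδ : 0 < δ)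
    (hdiss : ∀ v : ℝ, f v * v ≥ -C + γ₀ * |v| ^ (2 + δ)) :
    ∃ C₁ γ₁ : ℝ, 0 ≤ C₁ ∧ 0 < γ₁ ∧
      ∀ v : ℝ, 0 ≤ v → (∫ s in (0:ℝ)..v, f s) ≥ -C₁ + γ₁ * v ^ (2 + δ) := by
  set s₀ : ℝ := max 1 (2 * C / γ₀) with hs₀def
  have hs₀1 : (1:ℝ) ≤ s₀ := le_max_left _ _
  have hs₀pos : (0:ℝ) < s₀ := lt_of_lt_of_le one_pos hs₀1
  have h2δ : (0:ℝ) < 2 + δ := by linarith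
  set γ₁ : ℝ := γ₀ / (2 * (2 + δ)) with hγ₁def
  have hγ₁pos : 0 < γ₁ := by
    apply div_pos hγ₀; positivity
  set M : ℝ := ∫ s in (0:ℝ)..s₀, |f s| with hMdef
  have hM : 0 ≤ M := by
    apply intervalIntegral.integral_nonneg hs₀pos.le
    intro x _; exact abs_nonneg _
  refine ⟨M + γ₁ * s₀ ^ (2 + δ), γ₁, ?_, hγ₁pos, ?_⟩
  · have : 0 ≤ s₀ ^ (2 + δ) := Real.rpow_nonneg hs₀pos.le _
    positivity
  -- pointwise lower bound on f for s ≥ s₀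
  have hfs : ∀ s : ℝ, s₀ ≤ s → γ₀ / 2 * s ^ (1 + δ) ≤ f s := by
    intro s hss
    have hs : (0:ℝ) < s := lt_of_lt_of_le hs₀pos hss
    have h1 := hdiss s
    rw [abs_of_pos hs] at h1
    have hs1 : (1:ℝ) ≤ s := le_trans hs₀1 hss
    have hpow : 2 * C / γ₀ ≤ s ^ (2 + δ) := by
      have h2 : s ^ (1:ℝ) ≤ s ^ (2 + δ) :=
        Real.rpow_le_rpow_of_exponent_le hs1 (by linarith)
      rw [Real.rpow_one] at h2
      calc 2 * C / γ₀ ≤ s₀ := le_max_right _ _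
        _ ≤ s := hss
        _ ≤ s ^ (2 + δ) := h2
    have hCle : 2 * C ≤ γ₀ * s ^ (2 + δ) := by
      have := (div_le_iff₀ hγ₀).mp hpow
      linarith
    have hkey : γ₀ / 2 * s ^ (2 + δ) ≤ f s * s := by linarith
    have hsplit : s ^ (2 + δ) = s ^ (1 + δ) * s := by
      rw [show (2:ℝ) + δ = (1 + δ) + 1 by ring, Real.rpow_add hs, Real.rpow_one]
    rw [hsplit] at hkey
    have : γ₀ / 2 * s ^ (1 + δ) * s ≤ f s * s := by linarith [hkey]
    exact le_of_mul_le_mul_right this hs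
  intro v hv
  rcases le_total v s₀ with hvs | hvs
  · -- small v : use the bound by M
    have habs : |∫ s in (0:ℝ)..v, f s| ≤ ∫ s in (0:ℝ)..v, |f s| :=
      intervalIntegral.abs_integral_le_integral_abs hv
    have hmono : (∫ s in (0:ℝ)..v, |f s|) ≤ M := by
      apply intervalIntegral.integral_mono_interval le_rfl hv hvs
      · filter_upwards with x using abs_nonneg _
      · exact (hf.abs.intervalIntegrable _ _)
    have h1 : -M ≤ ∫ s in (0:ℝ)..v, f s := by
      have := neg_abs_le (∫ s in (0:ℝ)..v, f s)
      linarith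
    have hr : v ^ (2 + δ) ≤ s₀ ^ (2 + δ) := Real.rpow_le_rpow hv hvs h2δ.le
    have := mul_le_mul_of_nonneg_left hr hγ₁pos.le
    linarith
  · -- large v
    have hint1 : IntervalIntegrable f volume 0 s₀ := hf.intervalIntegrable _ _
    have hint2 : IntervalIntegrable f volume s₀ v := hf.intervalIntegrable _ _
    have hsplit : (∫ s in (0:ℝ)..v, f s)
        = (∫ s in (0:ℝ)..s₀, f s) + ∫ s in s₀..v, f s :=
      (intervalIntegral.integral_add_adjacent_intervals hint1 hint2).symm
    have h1 : -M ≤ ∫ s in (0:ℝ)..s₀, f s := by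
      have habs : |∫ s in (0:ℝ)..s₀, f s| ≤ M :=
        intervalIntegral.abs_integral_le_integral_abs hs₀pos.le
      have := neg_abs_le (∫ s in (0:ℝ)..s₀, f s)
      linarith
    have hgint : IntervalIntegrable (fun s : ℝ => γ₀ / 2 * s ^ (1 + δ)) volume s₀ v := by
      apply ContinuousOn.intervalIntegrable
      apply ContinuousOn.mul continuousOn_const
      intro x hx
      rw [Set.uIcc_of_le hvs] at hx
      exact (Real.continuousAt_rpow_const x (1 + δ)
        (Or.inl (ne_of_gt (lt_of_lt_of_le hs₀pos hx.1)))).continuousWithinAt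
    have h2 : (∫ s in s₀..v, γ₀ / 2 * s ^ (1 + δ)) ≤ ∫ s in s₀..v, f s := by
      apply intervalIntegral.integral_mono_on hvs hgint hint2
      intro x hx
      exact hfs x hx.1
    have h3 : (∫ s in s₀..v, γ₀ / 2 * s ^ (1 + δ))
        = γ₁ * (v ^ (2 + δ) - s₀ ^ (2 + δ)) := by
      rw [intervalIntegral.integral_const_mul,
        integral_rpow (Or.inl (by linarith : (-1:ℝ) < 1 + δ))]
      rw [show (1:ℝ) + δ + 1 = 2 + δ by ring]
      field_simp [hγ₁def]
      rw [hγ₁def]; field_simp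
    rw [hsplit]
    rw [h3] at h2
    linarith

theorem stmt0 (f : ℝ → ℝ) (hf : Continuous f)
    (C γ₀ δ : ℝ) (hC : 0 ≤ C) (hγ₀ : 0 < γ₀) (hδ : 0 < δ)
    (hdiss : ∀ v : ℝ, f v * v ≥ -C + γ₀ * |v| ^ (2 + δ)) :
    ∃ C₁ γ₁ : ℝ, 0 ≤ C₁ ∧ 0 < γ₁ ∧
      ∀ v : ℝ, (∫ s in (0:ℝ)..v, f s) ≥ -C₁ + γ₁ * |v| ^ (2 + δ) := by
  obtain ⟨C₁, γ₁, hC₁, hγ₁, h1⟩ := aux0 f hf C γ₀ δ hC hγ₀ hδ hdiss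
  have hg : Continuous (fun s : ℝ => -f (-s)) := (hf.comp continuous_neg).neg
  have hgdiss : ∀ v : ℝ, (fun s : ℝ => -f (-s)) v * v ≥ -C + γ₀ * |v| ^ (2 + δ) := by
    intro v
    have := hdiss (-v)
    simp only [abs_neg] at this
    simpa [neg_mul, mul_comm] using this
  obtain ⟨C₂, γ₂, hC₂, hγ₂, h2⟩ := aux0 (fun s : ℝ => -f (-s)) hg C γ₀ δ hC hγ₀ hδ hgdiss
  refine ⟨max C₁ C₂, min γ₁ γ₂, le_trans hC₁ (le_max_left _ _),
    lt_min hγ₁ hγ₂, ?_⟩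
  intro v
  have hrpow : (0:ℝ) ≤ |v| ^ (2 + δ) := Real.rpow_nonneg (abs_nonneg _) _
  rcases le_total 0 v with hv | hv
  · have := h1 v hv
    rw [abs_of_nonneg hv]
    have hmul : min γ₁ γ₂ * |v| ^ (2 + δ) ≤ γ₁ * |v| ^ (2 + δ) :=
      mul_le_mul_of_nonneg_right (min_le_left _ _) hrpow
    rw [abs_of_nonneg hv] at hmul
    have hmax : C₁ ≤ max C₁ C₂ := le_max_left _ _
    linarith
  · have hw : 0 ≤ -v := by linarith
    have heq : (∫ s in (0:ℝ)..v, f s) = ∫ s in (0:ℝ)..(-v), -f (-s) := by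
      rw [intervalIntegral.integral_neg, intervalIntegral.integral_comp_neg, neg_neg,
        intervalIntegral.integral_symm]
      simp
    have := h2 (-v) hw
    rw [abs_of_nonpos hv]
    have hmul : min γ₁ γ₂ * (-v) ^ (2 + δ) ≤ γ₂ * (-v) ^ (2 + δ) :=
      mul_le_mul_of_nonneg_right (min_le_right _ _)
        (Real.rpow_nonneg hw _)
    have hmax : C₂ ≤ max C₁ C₂ := le_max_right _ _
    rw [heq]
    linarith
end

section
/- Let y : [0,∞) → ℝ be a C² solution of y'' + φ(y)y' + f(y) = h(t), where φ, f ∈ C¹(ℝ), φ(v) ≥ β₀ > 0, f(v)·v ≥ -C + γ₀|v|^{2+δ} with γ₀, δ > 0, and h is bounded. Then there is a monotone function Q (depending only on φ, f) such that y(t)² + y'(t)² ≤ Q(y(0)² + y'(0)² + ‖h‖_{L∞(0,∞)}²) for all t ≥ 0. -/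
open Set

lemma le_boxSup {g : ℝ → ℝ} (hg : Continuous g) {r v : ℝ} (hv : |v| ≤ r) :
    g v ≤ sSup (g '' Set.Icc (-r) r) :=
  le_csSup (isCompact_Icc.bddAbove_image hg.continuousOn)
    (Set.mem_image_of_mem _ ⟨neg_le_of_abs_le hv, le_of_abs_le hv⟩)

lemma boxSup_mono {g : ℝ → ℝ} (hg : Continuous g) {r r' : ℝ} (hr : 0 ≤ r) (h : r ≤ r') :
    sSup (g '' Set.Icc (-r) r) ≤ sSup (g '' Set.Icc (-r') r') :=
  csSup_le_csSup (isCompact_Icc.bddAbove_image hg.continuousOn)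
    ⟨g 0, Set.mem_image_of_mem _ ⟨neg_nonpos.mpr hr, hr⟩⟩
    (Set.image_mono (Set.Icc_subset_Icc (neg_le_neg h) h))

lemma no_increase_above (g g' : ℝ → ℝ)
    (hg : ∀ t : ℝ, 0 ≤ t → HasDerivAt g (g' t) t) (N : ℝ)
    (hN : ∀ t : ℝ, 0 ≤ t → N < g t → g' t ≤ 0) :
    ∀ t : ℝ, 0 ≤ t → g t ≤ max (g 0) N := by
  intro t ht
  by_contra hc
  push_neg at hc
  set M := max (g 0) N with hM
  have hg0 : g 0 ≤ M := le_max_left _ _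
  set S : Set ℝ := {s | s ∈ Icc 0 t ∧ g s ≤ M} with hS
  have h0S : (0:ℝ) ∈ S := ⟨⟨le_refl _, ht⟩, hg0⟩
  have hSne : S.Nonempty := ⟨0, h0S⟩
  have hSbdd : BddAbove S := ⟨t, fun s hs => hs.1.2⟩
  set s₀ := sSup S with hs₀def
  have hs₀0 : 0 ≤ s₀ := le_csSup hSbdd h0S
  have hs₀t : s₀ ≤ t := csSup_le hSne fun s hs => hs.1.2
  have habove : ∀ s, s₀ < s → s ≤ t → M < g s := by
    intro s hs hst
    by_contra hgs
    push_neg at hgs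
    have : s ∈ S := ⟨⟨le_trans hs₀0 hs.le, hst⟩, hgs⟩
    exact absurd (le_csSup hSbdd this) (not_le.mpr hs)
  have hgs₀ : g s₀ ≤ M := by
    by_contra hgs₀
    push_neg at hgs₀
    have hcont : ContinuousAt g s₀ := (hg s₀ hs₀0).continuousAt
    have hev : {x | M < g x} ∈ nhds s₀ := hcont.preimage_mem_nhds (Ioi_mem_nhds hgs₀)
    obtain ⟨ε, hε, hball⟩ := Metric.mem_nhds_iff.mp hev
    have : ∀ s ∈ S, s ≤ s₀ - ε / 2 := by
      intro s hs
      by_contra hsle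
      push_neg at hsle
      have hs' : s ≤ s₀ := le_csSup hSbdd hs
      have : s ∈ Metric.ball s₀ ε := by
        rw [Metric.mem_ball, Real.dist_eq, abs_sub_lt_iff]
        constructor <;> linarith
      exact absurd hs.2 (not_le.mpr (hball this))
    have := csSup_le hSne this
    linarith
  have hs₀lt : s₀ < t := by
    rcases lt_or_eq_of_le hs₀t with h | h
    · exact h
    · exfalso; rw [h] at hgs₀; linarith
  have hanti : AntitoneOn g (Icc s₀ t) := by
    apply antitoneOn_of_deriv_nonpos (convex_Icc _ _)
    · intro s hs
      exact ((hg s (le_trans hs₀0 hs.1)).continuousAt).continuousWithinAt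
    · intro s hs
      rw [interior_Icc] at hs
      exact ((hg s (le_trans hs₀0 hs.1.le)).differentiableAt).differentiableWithinAt
    · intro s hs
      rw [interior_Icc] at hs
      have hs0 : 0 ≤ s := le_trans hs₀0 hs.1.le
      have := hN s hs0 (lt_of_le_of_lt (le_max_right (g 0) N) (habove s hs.1 hs.2.le))
      rw [(hg s hs0).deriv]
      exact this
  have := hanti (left_mem_Icc.mpr hs₀t) (right_mem_Icc.mpr hs₀t) hs₀t
  linarith

set_option maxHeartbeats 2000000 in
/-- Uniform-in-time bound for the damped ODE `y'' + φ(y) y' + f(y) = h(t)`: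
the monotone function `Q` depends only on `φ` and `f`. -/
theorem stmt2 (φ f : ℝ → ℝ) (hφ : ContDiff ℝ 1 φ) (hf : ContDiff ℝ 1 f)
    (β₀ : ℝ) (hβ₀ : 0 < β₀) (hφpos : ∀ v, φ v ≥ β₀)
    (C γ₀ δ : ℝ) (hγ₀ : 0 < γ₀) (hδ : 0 < δ)
    (hdiss : ∀ v : ℝ, f v * v ≥ -C + γ₀ * |v| ^ (2 + δ)) :
    ∃ Q : ℝ → ℝ, Monotone Q ∧
      ∀ (y y' y'' h : ℝ → ℝ) (B : ℝ),
        (∀ t, 0 ≤ t → HasDerivAt y (y' t) t) →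
        (∀ t, 0 ≤ t → HasDerivAt y' (y'' t) t) →
        (∀ t, 0 ≤ t → y'' t + φ (y t) * y' t + f (y t) = h t) →
        (∀ t, 0 ≤ t → |h t| ≤ B) →
        ∀ t, 0 ≤ t → y t ^ 2 + y' t ^ 2 ≤ Q (y 0 ^ 2 + y' 0 ^ 2 + B ^ 2) := by
  have hδ1 : (0:ℝ) < 1 + δ := by linarith
  have hδ2 : (0:ℝ) < 2 + δ := by linarith
  have hφc : Continuous φ := hφ.continuous
  have hfc : Continuous f := hf.continuous
  -- antiderivatives
  set Φ : ℝ → ℝ := fun u => ∫ v in (0:ℝ)..u, φ v with hΦdef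
  set F : ℝ → ℝ := fun u => ∫ v in (0:ℝ)..u, f v with hFdef
  have hΦd : ∀ u, HasDerivAt Φ (φ u) u := by
    intro u; rw [hΦdef]; exact (hφc.integral_hasStrictDerivAt 0 u).hasDerivAt
  have hFd : ∀ u, HasDerivAt F (f u) u := by
    intro u; rw [hFdef]; exact (hfc.integral_hasStrictDerivAt 0 u).hasDerivAt
  have hΦcont : Continuous Φ := by
    rw [continuous_iff_continuousAt]; exact fun u => (hΦd u).continuousAt
  have hFcont : Continuous F := by
    rw [continuous_iff_continuousAt]; exact fun u => (hFd u).continuousAt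
  have hΦ0 : Φ 0 = 0 := by simp only [hΦdef]; exact intervalIntegral.integral_same
  have hF0 : F 0 = 0 := by simp only [hFdef]; exact intervalIntegral.integral_same
  have hΦlb : ∀ a : ℝ, 0 ≤ a → β₀ * a ≤ Φ a := by
    intro a ha
    have h1 : ∫ v in (0:ℝ)..a, (β₀:ℝ) ≤ ∫ v in (0:ℝ)..a, φ v :=
      intervalIntegral.integral_mono_on ha intervalIntegrable_const
        (hφc.intervalIntegrable _ _) (fun x _ => hφpos x)
    rw [intervalIntegral.integral_const, smul_eq_mul] at h1
    have h2 : Φ a = ∫ v in (0:ℝ)..a, φ v := by simp only [hΦdef]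
    rw [h2]; linarith
  have hΦub : ∀ a : ℝ, a ≤ 0 → Φ a ≤ β₀ * a := by
    intro a ha
    have h1 : ∫ v in a..(0:ℝ), (β₀:ℝ) ≤ ∫ v in a..(0:ℝ), φ v :=
      intervalIntegral.integral_mono_on ha intervalIntegrable_const
        (hφc.intervalIntegrable _ _) (fun x _ => hφpos x)
    rw [intervalIntegral.integral_const, smul_eq_mul] at h1
    have h2 : Φ a = -∫ v in a..(0:ℝ), φ v := by
      simp only [hΦdef]; exact intervalIntegral.integral_symm a 0
    rw [h2]; linarith
  -- key radius
  set R₀ : ℝ := (2*(|C|+1)/γ₀) ^ ((2+δ)⁻¹) with hR₀def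
  have hR₀pos : 0 < R₀ := Real.rpow_pos_of_pos (by positivity) _
  have hR₀pow : R₀ ^ ((2:ℝ)+δ) = 2*(|C|+1)/γ₀ := by
    rw [hR₀def]; exact Real.rpow_inv_rpow (by positivity) (by positivity : (0:ℝ) < 2+δ).ne'
  have hfge : ∀ v : ℝ, R₀ ≤ v → γ₀/2 * v ^ ((1:ℝ)+δ) ≤ f v := by
    intro v hv
    have hv0 : 0 < v := hR₀pos.trans_le hv
    have hpow : v ^ ((1:ℝ)+δ) * v = v ^ ((2:ℝ)+δ) := by
      rw [show (2:ℝ)+δ = (1+δ)+1 by ring, Real.rpow_add_one hv0.ne']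
    have h2 : 2*(|C|+1)/γ₀ ≤ v ^ ((2:ℝ)+δ) := by
      calc 2*(|C|+1)/γ₀ = R₀ ^ ((2:ℝ)+δ) := hR₀pow.symm
      _ ≤ v ^ ((2:ℝ)+δ) := Real.rpow_le_rpow hR₀pos.le hv (by positivity)
    have h3 : |C| + 1 ≤ γ₀/2 * v ^ ((2:ℝ)+δ) := by
      have h4 := mul_le_mul_of_nonneg_left h2 (le_of_lt (by positivity : (0:ℝ) < γ₀/2))
      calc |C| + 1 = γ₀/2 * (2*(|C|+1)/γ₀) := by field_simp
      _ ≤ _ := h4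
    have h4 := hdiss v
    rw [abs_of_pos hv0] at h4
    rw [← mul_le_mul_iff_of_pos_right hv0, mul_assoc, hpow]
    linarith [le_abs_self C]
  have hfle : ∀ v : ℝ, v ≤ -R₀ → f v ≤ -(γ₀/2 * (-v) ^ ((1:ℝ)+δ)) := by
    intro v hv
    have hw0 : 0 < -v := by linarith
    have hwR : R₀ ≤ -v := by linarith
    have habs : |v| = -v := abs_of_neg (by linarith)
    have hpow : (-v) ^ ((1:ℝ)+δ) * (-v) = (-v) ^ ((2:ℝ)+δ) := by
      rw [show (2:ℝ)+δ = (1+δ)+1 by ring, Real.rpow_add_one hw0.ne']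
    have h2 : 2*(|C|+1)/γ₀ ≤ (-v) ^ ((2:ℝ)+δ) := by
      calc 2*(|C|+1)/γ₀ = R₀ ^ ((2:ℝ)+δ) := hR₀pow.symm
      _ ≤ (-v) ^ ((2:ℝ)+δ) := Real.rpow_le_rpow hR₀pos.le hwR (by positivity)
    have h3 : |C| + 1 ≤ γ₀/2 * (-v) ^ ((2:ℝ)+δ) := by
      have h4 := mul_le_mul_of_nonneg_left h2 (le_of_lt (by positivity : (0:ℝ) < γ₀/2))
      calc |C| + 1 = γ₀/2 * (2*(|C|+1)/γ₀) := by field_simp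
      _ ≤ _ := h4
    have h4 := hdiss v
    rw [habs] at h4
    rw [← mul_le_mul_iff_of_pos_right hw0]
    have e1 : f v * -v = -(f v * v) := by ring
    have e2 : -(γ₀/2 * (-v) ^ ((1:ℝ)+δ)) * -v = -(γ₀/2 * ((-v) ^ ((1:ℝ)+δ) * -v)) := by ring
    rw [e1, e2, hpow]
    linarith [le_abs_self C]
  -- constants
  set m₀ : ℝ := γ₀/2 * R₀ ^ ((1:ℝ)+δ) with hm₀def
  have hm₀pos : 0 < m₀ := by
    rw [hm₀def]; positivity
  set C₂ : ℝ := sSup ((fun v => |f v * Φ v|) '' Set.Icc (-R₀) R₀) with hC₂def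
  set C₅ : ℝ := sSup ((fun v => |F v|) '' Set.Icc (-R₀) R₀) with hC₅def
  have hC₂nn : 0 ≤ C₂ := by
    rw [hC₂def]
    exact le_trans (abs_nonneg _)
      (le_boxSup ((hfc.mul hΦcont).abs) (by rw [abs_zero]; exact hR₀pos.le))
  have hC₅nn : 0 ≤ C₅ := by
    rw [hC₅def]
    exact le_trans (abs_nonneg _)
      (le_boxSup (hFcont.abs) (by rw [abs_zero]; exact hR₀pos.le))
  have hC₂bd : ∀ a : ℝ, |a| ≤ R₀ → |f a * Φ a| ≤ C₂ := by
    intro a ha; rw [hC₂def]; exact le_boxSup ((hfc.mul hΦcont).abs) ha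
  have hC₅bd : ∀ a : ℝ, |a| ≤ R₀ → |F a| ≤ C₅ := by
    intro a ha; rw [hC₅def]; exact le_boxSup (hFcont.abs) ha
  set C₆ : ℝ := m₀ * R₀ + C₅ with hC₆def
  have hC₆nn : 0 ≤ C₆ := by rw [hC₆def]; positivity
  have hm₀le : ∀ x : ℝ, R₀ ≤ x → m₀ ≤ f x := by
    intro x hx
    have h1 : R₀ ^ ((1:ℝ)+δ) ≤ x ^ ((1:ℝ)+δ) :=
      Real.rpow_le_rpow hR₀pos.le hx (by positivity)
    have h2 := hfge x hx
    rw [hm₀def]; nlinarith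
  have hm₀le' : ∀ x : ℝ, x ≤ -R₀ → f x ≤ -m₀ := by
    intro x hx
    have h1 : R₀ ^ ((1:ℝ)+δ) ≤ (-x) ^ ((1:ℝ)+δ) :=
      Real.rpow_le_rpow hR₀pos.le (by linarith) (by positivity)
    have h2 := hfle x hx
    rw [hm₀def]; nlinarith
  -- coercive lower bound for F
  have hFlb : ∀ u : ℝ, m₀ * |u| - C₆ ≤ F u := by
    intro u
    rcases le_or_gt R₀ u with hu | hu
    · have hsplit : F u = F R₀ + ∫ v in R₀..u, f v := by
        simp only [hFdef]
        rw [intervalIntegral.integral_add_adjacent_intervals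
          (hfc.intervalIntegrable 0 R₀) (hfc.intervalIntegrable R₀ u)]
      have hmono : ∫ v in R₀..u, (m₀:ℝ) ≤ ∫ v in R₀..u, f v :=
        intervalIntegral.integral_mono_on hu intervalIntegrable_const
          (hfc.intervalIntegrable _ _) (fun x hx => hm₀le x hx.1)
      rw [intervalIntegral.integral_const, smul_eq_mul] at hmono
      have hFR : -C₅ ≤ F R₀ := by
        have := hC₅bd R₀ (by rw [abs_of_pos hR₀pos])
        linarith [neg_abs_le (F R₀)]
      have habs : |u| = u := abs_of_pos (hR₀pos.trans_le hu)
      rw [hsplit, habs, hC₆def]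
      nlinarith
    rcases le_or_gt u (-R₀) with hu2 | hu2
    · have hsplit : F u = F (-R₀) + ∫ v in (-R₀)..u, f v := by
        simp only [hFdef]
        rw [intervalIntegral.integral_add_adjacent_intervals
          (hfc.intervalIntegrable 0 (-R₀)) (hfc.intervalIntegrable (-R₀) u)]
      have hsym : ∫ v in (-R₀)..u, f v = -∫ v in u..(-R₀), f v :=
        intervalIntegral.integral_symm u (-R₀)
      have hmono : ∫ v in u..(-R₀), f v ≤ ∫ v in u..(-R₀), (-m₀:ℝ) :=
        intervalIntegral.integral_mono_on hu2 (hfc.intervalIntegrable _ _)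
          intervalIntegrable_const (fun x hx => hm₀le' x hx.2)
      rw [intervalIntegral.integral_const, smul_eq_mul] at hmono
      have hFR : -C₅ ≤ F (-R₀) := by
        have := hC₅bd (-R₀) (by rw [abs_neg, abs_of_pos hR₀pos])
        linarith [neg_abs_le (F (-R₀))]
      have habs : |u| = -u := abs_of_neg (by linarith)
      rw [hsplit, hsym, habs, hC₆def]
      nlinarith
    · have habs : |u| ≤ R₀ := abs_le.mpr ⟨hu2.le, hu.le⟩
      have h1 := hC₅bd u habs
      have h2 : m₀ * |u| ≤ m₀ * R₀ := mul_le_mul_of_nonneg_left habs hm₀pos.le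
      rw [hC₆def]
      linarith [neg_abs_le (F u)]
  clear hR₀def hm₀def hC₂def hC₅def hC₆def hΦdef hFdef
  clear_value R₀ m₀ C₂ C₅ C₆ Φ F
  -- B-dependent quantities
  set R₁ : ℝ → ℝ := fun b => max R₀ ((4*b/γ₀ + 1) ^ ((1+δ)⁻¹)) with hR₁def
  set Mf : ℝ → ℝ := fun b => sSup ((fun v => |Φ v|) '' Set.Icc (-(R₁ b)) (R₁ b)) with hMfdef
  set Kf : ℝ → ℝ := fun b => 2*b^2/β₀ + b * Mf b + C₂ with hKfdef
  set R₂ : ℝ → ℝ := fun b => max (R₁ b) ((4 * Kf b/(γ₀*β₀) + 1) ^ ((2+δ)⁻¹)) with hR₂def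
  set Sb : ℝ → ℝ := fun r => sSup ((fun v => 2*(Φ v)^2 + 2*F v) '' Set.Icc (-r) r) with hSbdef
  set Nf : ℝ → ℝ := fun b => 3/β₀ * Kf b + Sb (R₂ b) with hNfdef
  have hgScont : Continuous (fun v => 2*(Φ v)^2 + 2*F v) :=
    (continuous_const.mul (hΦcont.pow 2)).add (continuous_const.mul hFcont)
  have hR₁R₀ : ∀ b, R₀ ≤ R₁ b := fun b => le_max_left _ _
  have hR₁pos : ∀ b, 0 < R₁ b := fun b => hR₀pos.trans_le (hR₁R₀ b)
  have hMbd : ∀ b a, |a| ≤ R₁ b → |Φ a| ≤ Mf b := by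
    intro b a ha; rw [hMfdef]; exact le_boxSup hΦcont.abs ha
  have hMnn : ∀ b, 0 ≤ Mf b := by
    intro b
    have := hMbd b 0 (by rw [abs_zero]; exact (hR₁pos b).le)
    rw [hΦ0, abs_zero] at this; exact this
  have hKnn : ∀ b, 0 ≤ b → 0 ≤ Kf b := by
    intro b hb
    rw [hKfdef]
    have h1 : 0 ≤ 2*b^2/β₀ := by positivity
    have h2 : 0 ≤ b * Mf b := mul_nonneg hb (hMnn b)
    linarith
  have hR₂R₁ : ∀ b, R₁ b ≤ R₂ b := fun b => le_max_left _ _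
  have hR₂pos : ∀ b, 0 < R₂ b := fun b => (hR₁pos b).trans_le (hR₂R₁ b)
  have hSbbd : ∀ r a, |a| ≤ r → 2*(Φ a)^2 + 2*F a ≤ Sb r := by
    intro r a ha; rw [hSbdef]; exact le_boxSup hgScont ha
  have hSbnn : ∀ r, 0 ≤ r → 0 ≤ Sb r := by
    intro r hr
    have := hSbbd r 0 (by rw [abs_zero]; exact hr)
    rw [hΦ0, hF0] at this
    simpa using this
  -- monotonicity in b
  have hR₁m : ∀ b b', 0 ≤ b → b ≤ b' → R₁ b ≤ R₁ b' := by
    intro b b' hb hbb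
    rw [hR₁def]
    refine max_le_max le_rfl (Real.rpow_le_rpow (by positivity) (by gcongr) (by positivity))
  have hMm : ∀ b b', 0 ≤ b → b ≤ b' → Mf b ≤ Mf b' := by
    intro b b' hb hbb
    rw [hMfdef]
    exact boxSup_mono hΦcont.abs (hR₁pos b).le (hR₁m b b' hb hbb)
  have hKm : ∀ b b', 0 ≤ b → b ≤ b' → Kf b ≤ Kf b' := by
    intro b b' hb hbb
    rw [hKfdef]
    have h1 : 2*b^2/β₀ ≤ 2*b'^2/β₀ := (div_le_div_iff_of_pos_right hβ₀).mpr (by nlinarith)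
    have h2 : b * Mf b ≤ b' * Mf b' :=
      mul_le_mul hbb (hMm b b' hb hbb) (hMnn b) (hb.trans hbb)
    linarith
  have hR₂m : ∀ b b', 0 ≤ b → b ≤ b' → R₂ b ≤ R₂ b' := by
    intro b b' hb hbb
    rw [hR₂def]
    refine max_le_max (hR₁m b b' hb hbb) (Real.rpow_le_rpow ?_ ?_ (by positivity))
    · have h0 := hKnn b hb
      have hpos : (0:ℝ) < γ₀*β₀ := by positivity
      have : 0 ≤ 4 * Kf b/(γ₀*β₀) := by positivity
      linarith
    · have h1 : Kf b ≤ Kf b' := hKm b b' hb hbb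
      have hpos : (0:ℝ) < γ₀*β₀ := by positivity
      gcongr
  have hSbm : ∀ r r', 0 ≤ r → r ≤ r' → Sb r ≤ Sb r' := by
    intro r r' hr hrr
    rw [hSbdef]
    exact boxSup_mono hgScont hr hrr
  have hNm : ∀ b b', 0 ≤ b → b ≤ b' → Nf b ≤ Nf b' := by
    intro b b' hb hbb
    rw [hNfdef]
    have h1 : 3/β₀ * Kf b ≤ 3/β₀ * Kf b' :=
      mul_le_mul_of_nonneg_left (hKm b b' hb hbb) (by positivity)
    have h2 : Sb (R₂ b) ≤ Sb (R₂ b') := hSbm _ _ (hR₂pos b).le (hR₂m b b' hb hbb)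
    linarith
  have hR₁ge : ∀ b, (4*b/γ₀ + 1) ^ ((1+δ)⁻¹) ≤ R₁ b := fun b => le_max_right _ _
  have hR₂ge : ∀ b, (4 * Kf b/(γ₀*β₀) + 1) ^ ((2+δ)⁻¹) ≤ R₂ b := fun b => le_max_right _ _
  have hKfeq : ∀ b, Kf b = 2*b^2/β₀ + b * Mf b + C₂ := fun b => by rw [hKfdef]
  have hNfeq : ∀ b, Nf b = 3/β₀ * Kf b + Sb (R₂ b) := fun b => by rw [hNfdef]
  clear hR₁def hMfdef hKfdef hR₂def hSbdef hNfdef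
  clear_value R₁ Mf Kf R₂ Sb Nf
  -- the monotone function Q
  refine ⟨fun D => 2*((max ((3:ℝ)/2*(max D 0) + Sb (Real.sqrt (max D 0)))
      (Nf (Real.sqrt (max D 0)))) + 2*C₆) +
      (((max ((3:ℝ)/2*(max D 0) + Sb (Real.sqrt (max D 0)))
      (Nf (Real.sqrt (max D 0)))) + 2*C₆)/(2*m₀))^2, ?_, ?_⟩
  · -- monotonicity of Q
    intro D D' hDD'
    simp only
    have hEE : max D 0 ≤ max D' 0 := max_le_max hDD' le_rfl
    have hE0 : 0 ≤ max D 0 := le_max_right _ _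
    have hs : Real.sqrt (max D 0) ≤ Real.sqrt (max D' 0) := Real.sqrt_le_sqrt hEE
    have hs0 : 0 ≤ Real.sqrt (max D 0) := Real.sqrt_nonneg _
    have hLM : max ((3:ℝ)/2*(max D 0) + Sb (Real.sqrt (max D 0))) (Nf (Real.sqrt (max D 0))) ≤
        max ((3:ℝ)/2*(max D' 0) + Sb (Real.sqrt (max D' 0))) (Nf (Real.sqrt (max D' 0))) := by
      refine max_le_max ?_ (hNm _ _ hs0 hs)
      have := hSbm _ _ hs0 hs
      linarith
    have hLM0 : 0 ≤ max ((3:ℝ)/2*(max D 0) + Sb (Real.sqrt (max D 0)))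
        (Nf (Real.sqrt (max D 0))) := by
      refine le_trans ?_ (le_max_left _ _)
      have := hSbnn _ hs0
      linarith
    set x := max ((3:ℝ)/2*(max D 0) + Sb (Real.sqrt (max D 0))) (Nf (Real.sqrt (max D 0)))
    set x' := max ((3:ℝ)/2*(max D' 0) + Sb (Real.sqrt (max D' 0))) (Nf (Real.sqrt (max D' 0)))
    have hq : (x + 2*C₆)/(2*m₀) ≤ (x' + 2*C₆)/(2*m₀) :=
      (div_le_div_iff_of_pos_right (by positivity)).mpr (by linarith)
    have hq2 : ((x + 2*C₆)/(2*m₀))^2 ≤ ((x' + 2*C₆)/(2*m₀))^2 :=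
      pow_le_pow_left₀ (by positivity) hq 2
    linarith
  · -- the main a priori estimate
    intro y y' y'' h B hy hy' heq hB
    have hB0 : 0 ≤ B := le_trans (abs_nonneg _) (hB 0 le_rfl)
    -- the key damping estimate for large |a|
    have hGbig : ∀ a : ℝ, R₁ B ≤ |a| →
        B*|Φ a| - f a * Φ a ≤ -(γ₀*β₀/4 * |a| ^ ((2:ℝ)+δ)) := by
      intro a ha
      have hBle : B ≤ γ₀/4 * |a| ^ ((1:ℝ)+δ) := by
        have base : (0:ℝ) ≤ 4*B/γ₀ + 1 := by positivity
        have t1 : 4*B/γ₀ + 1 ≤ |a| ^ ((1:ℝ)+δ) := by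
          calc 4*B/γ₀ + 1 = ((4*B/γ₀ + 1) ^ ((1+δ)⁻¹)) ^ ((1:ℝ)+δ) :=
            (Real.rpow_inv_rpow base hδ1.ne').symm
          _ ≤ |a| ^ ((1:ℝ)+δ) :=
            Real.rpow_le_rpow (by positivity) (le_trans (hR₁ge B) ha) hδ1.le
        have t2 := mul_le_mul_of_nonneg_left t1 (by positivity : (0:ℝ) ≤ γ₀/4)
        have e : γ₀/4*(4*B/γ₀+1) = B + γ₀/4 := by field_simp
        rw [e] at t2
        linarith
      have haR₀ : R₀ ≤ |a| := le_trans (hR₁R₀ B) ha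
      rcases abs_cases a with ⟨he, h0⟩ | ⟨he, h0⟩
      · rw [he] at hBle haR₀ ⊢
        have ha0 : 0 < a := hR₀pos.trans_le haR₀
        have hfa := hfge a haR₀
        have hΦa := hΦlb a h0
        have hΦapos : 0 < Φ a := lt_of_lt_of_le (by positivity) hΦa
        rw [abs_of_pos hΦapos]
        have s1 : B * Φ a ≤ γ₀/4*a^((1:ℝ)+δ) * Φ a :=
          mul_le_mul_of_nonneg_right hBle hΦapos.le
        have s2 : γ₀/2*a^((1:ℝ)+δ) * Φ a ≤ f a * Φ a :=
          mul_le_mul_of_nonneg_right hfa hΦapos.le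
        have s3 : γ₀/4*a^((1:ℝ)+δ)*(β₀*a) ≤ γ₀/4*a^((1:ℝ)+δ)*Φ a := by
          apply mul_le_mul_of_nonneg_left hΦa
          have := Real.rpow_nonneg ha0.le ((1:ℝ)+δ)
          positivity
        have s4 : γ₀/4*a^((1:ℝ)+δ)*(β₀*a) = γ₀*β₀/4*a^((2:ℝ)+δ) := by
          rw [show (2:ℝ)+δ = (1+δ)+1 by ring, Real.rpow_add_one ha0.ne']; ring
        linarith
      · rw [he] at hBle haR₀ ⊢
        have hna : 0 < -a := hR₀pos.trans_le haR₀
        have haR : a ≤ -R₀ := by linarith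
        have hfa := hfle a haR
        have hΦa := hΦub a (by linarith)
        have hΦaneg : Φ a < 0 :=
          lt_of_le_of_lt hΦa (mul_neg_of_pos_of_neg hβ₀ (by linarith))
        rw [abs_of_neg hΦaneg]
        have hrnn : (0:ℝ) ≤ (-a) ^ ((1:ℝ)+δ) := Real.rpow_nonneg hna.le _
        have s1 : B * -Φ a ≤ γ₀/4*(-a)^((1:ℝ)+δ) * -Φ a :=
          mul_le_mul_of_nonneg_right hBle (by linarith)
        have s2 : γ₀/2*(-a)^((1:ℝ)+δ) * -Φ a ≤ (-f a) * -Φ a :=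
          mul_le_mul_of_nonneg_right (by linarith) (by linarith)
        have s3 : γ₀/4*(-a)^((1:ℝ)+δ)*(β₀*(-a)) ≤ γ₀/4*(-a)^((1:ℝ)+δ)* -Φ a := by
          apply mul_le_mul_of_nonneg_left (by nlinarith)
          positivity
        have s4 : γ₀/4*(-a)^((1:ℝ)+δ)*(β₀*(-a)) = γ₀*β₀/4*(-a)^((2:ℝ)+δ) := by
          rw [show (2:ℝ)+δ = (1+δ)+1 by ring, Real.rpow_add_one hna.ne']; ring
        nlinarith
    have hG2 : ∀ a : ℝ, R₂ B ≤ |a| → B*|Φ a| - f a * Φ a ≤ -Kf B := by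
      intro a ha
      have h1 := hGbig a (le_trans (hR₂R₁ B) ha)
      have hKnnB := hKnn B hB0
      have base : (0:ℝ) ≤ 4*Kf B/(γ₀*β₀) + 1 := by
        have : (0:ℝ) ≤ 4*Kf B/(γ₀*β₀) := div_nonneg (by linarith) (by positivity)
        linarith
      have t1 : 4*Kf B/(γ₀*β₀) + 1 ≤ |a| ^ ((2:ℝ)+δ) := by
        calc 4*Kf B/(γ₀*β₀) + 1 = ((4*Kf B/(γ₀*β₀) + 1) ^ ((2+δ)⁻¹)) ^ ((2:ℝ)+δ) :=
          (Real.rpow_inv_rpow base hδ2.ne').symm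
        _ ≤ |a| ^ ((2:ℝ)+δ) :=
          Real.rpow_le_rpow (by positivity) (le_trans (hR₂ge B) ha) hδ2.le
      have t2 := mul_le_mul_of_nonneg_left t1 (by positivity : (0:ℝ) ≤ γ₀*β₀/4)
      have e : γ₀*β₀/4*(4*Kf B/(γ₀*β₀)+1) = Kf B + γ₀*β₀/4 := by field_simp
      rw [e] at t2
      linarith [mul_pos hγ₀ hβ₀]
    have hG1 : ∀ a : ℝ, B*|Φ a| - f a * Φ a ≤ B * Mf B + C₂ := by
      intro a
      rcases le_or_gt (R₁ B) |a| with hca | hca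
      · have h1 := hGbig a hca
        have h2 : (0:ℝ) ≤ γ₀*β₀/4 * |a| ^ ((2:ℝ)+δ) := by
          have := Real.rpow_nonneg (abs_nonneg a) ((2:ℝ)+δ)
          positivity
        have h3 : 0 ≤ B * Mf B := mul_nonneg hB0 (hMnn B)
        linarith
      · have s1 : B*|Φ a| ≤ B * Mf B :=
          mul_le_mul_of_nonneg_left (hMbd B a hca.le) hB0
        have s2 : -(f a * Φ a) ≤ C₂ := by
          rcases le_or_gt |a| R₀ with hra | hra
          · linarith [neg_abs_le (f a * Φ a), hC₂bd a hra]
          · have hfsign : 0 ≤ f a * Φ a := by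
              rcases abs_cases a with ⟨he, h0⟩ | ⟨he, h0⟩
              · rw [he] at hra
                have ha0 : 0 < a := hR₀pos.trans hra
                have h4 := hfge a hra.le
                have h5 := hΦlb a h0
                have h6 : (0:ℝ) ≤ γ₀/2*a^((1:ℝ)+δ) := by
                  have := Real.rpow_nonneg ha0.le ((1:ℝ)+δ)
                  positivity
                apply mul_nonneg (by linarith) (by nlinarith)
              · rw [he] at hra
                have hna : 0 < -a := hR₀pos.trans hra
                have h4 := hfle a (by linarith)
                have h5 := hΦub a (by linarith)
                have h6 : (0:ℝ) ≤ γ₀/2*(-a)^((1:ℝ)+δ) := by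
                  have := Real.rpow_nonneg hna.le ((1:ℝ)+δ)
                  positivity
                have h7 : 0 ≤ -f a := by linarith
                have h8 : 0 ≤ -Φ a := by linarith [mul_pos hβ₀ hna]
                linarith [mul_nonneg h7 h8]
            linarith
        linarith
    -- the Lyapunov function
    set L : ℝ → ℝ :=
      fun t => 1/2 * y' t ^ 2 + 1/2 * (y' t + Φ (y t)) ^ 2 + 2 * F (y t) with hLdef
    set L' : ℝ → ℝ :=
      fun t => 2 * h t * y' t + h t * Φ (y t) - φ (y t) * y' t ^ 2 - f (y t) * Φ (y t)
      with hL'def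
    have hLd : ∀ t : ℝ, 0 ≤ t → HasDerivAt L (L' t) t := by
      intro t ht
      have h1 := hy t ht
      have h2 := hy' t ht
      have hp : HasDerivAt (fun s => Φ (y s)) (φ (y t) * y' t) t := (hΦd (y t)).comp t h1
      have hq : HasDerivAt (fun s => F (y s)) (f (y t) * y' t) t := (hFd (y t)).comp t h1
      have hraw := (((h2.pow 2).const_mul ((1:ℝ)/2)).add
        (((h2.add hp).pow 2).const_mul ((1:ℝ)/2))).add (hq.const_mul (2:ℝ))
      rw [hLdef, hL'def]
      convert hraw using 1 <;> try rfl
      have hyy : y'' t = h t - φ (y t) * y' t - f (y t) := by linarith [heq t ht]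
      rw [hyy]; push_cast; simp only [Pi.add_apply]; ring
    have hLeq : ∀ s : ℝ, L s = 1/2 * y' s ^ 2 + 1/2 * (y' s + Φ (y s)) ^ 2 + 2 * F (y s) :=
      fun s => by rw [hLdef]
    have hL'eq : ∀ s : ℝ, L' s = 2 * h s * y' s + h s * Φ (y s) - φ (y s) * y' s ^ 2
        - f (y s) * Φ (y s) := fun s => by rw [hL'def]
    clear hLdef hL'def
    clear_value L L'
    -- the derivative is nonpositive above the level Nf B
    have hcrit : ∀ t : ℝ, 0 ≤ t → Nf B < L t → L' t ≤ 0 := by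
      intro t ht hLt
      have hH := hB t ht
      have m1 : 2 * h t * y' t ≤ 2*B*|y' t| := by
        have e1 : h t * y' t ≤ |h t| * |y' t| := by rw [← abs_mul]; exact le_abs_self _
        have e2 : |h t| * |y' t| ≤ B * |y' t| :=
          mul_le_mul_of_nonneg_right hH (abs_nonneg _)
        linarith
      have m2 : h t * Φ (y t) ≤ B*|Φ (y t)| := by
        have e1 : h t * Φ (y t) ≤ |h t| * |Φ (y t)| := by rw [← abs_mul]; exact le_abs_self _
        have e2 : |h t| * |Φ (y t)| ≤ B * |Φ (y t)| :=
          mul_le_mul_of_nonneg_right hH (abs_nonneg _)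
        linarith
      have m3 : β₀ * y' t ^2 ≤ φ (y t) * y' t ^2 :=
        mul_le_mul_of_nonneg_right (hφpos (y t)) (sq_nonneg _)
      have hmaster : L' t ≤ 2*B*|y' t| - β₀*y' t^2 + (B*|Φ (y t)| - f (y t)*Φ (y t)) := by
        rw [hL'eq t]; linarith
      rcases le_or_gt (R₂ B) |y t| with hcase | hcase
      · have hg2 := hG2 (y t) hcase
        have am : 2*B*|y' t| - β₀*|y' t|^2 ≤ B^2/β₀ := by
          rw [le_div_iff₀ hβ₀]
          nlinarith [sq_nonneg (β₀*|y' t| - B)]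
        rw [sq_abs] at am
        have hKB : B^2/β₀ ≤ Kf B := by
          rw [hKfeq B]
          have h1 : B^2/β₀ ≤ 2*B^2/β₀ := by
            rw [div_le_div_iff_of_pos_right hβ₀]; nlinarith
          have h2 : 0 ≤ B * Mf B := mul_nonneg hB0 (hMnn B)
          linarith
        linarith
      · rcases le_or_gt (Kf B) (β₀/2 * y' t^2) with hcb | hcb
        · have am2 : 2*B*|y' t| - β₀/2*|y' t|^2 ≤ 2*B^2/β₀ := by
            rw [le_div_iff₀ hβ₀]
            nlinarith [sq_nonneg (β₀*|y' t| - 2*B)]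
          rw [sq_abs] at am2
          have hg1 := hG1 (y t)
          rw [hKfeq B] at hcb
          linarith
        · exfalso
          have h3b : 3/2*y' t^2 ≤ 3/β₀*Kf B := by
            rw [show (3:ℝ)/β₀*Kf B = 3*Kf B/β₀ from by ring, le_div_iff₀ hβ₀]
            nlinarith
          have hsb := hSbbd (R₂ B) (y t) hcase.le
          have hexp : (y' t + Φ (y t))^2 ≤ 2*y' t^2 + 2*(Φ (y t))^2 := by
            nlinarith [sq_nonneg (y' t - Φ (y t))]
          have hLle : L t ≤ Nf B := by
            rw [hNfeq B]
            rw [hLeq t]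
            nlinarith [sq_nonneg (Φ (y t))]
          linarith
    -- apply the no-increase lemma
    have hcross := no_increase_above L L' hLd (Nf B) hcrit
    intro t ht
    have hLt := hcross t ht
    have hlow : 1/2*y' t^2 + 2*F (y t) ≤ L t := by
      rw [hLeq t]; nlinarith [sq_nonneg (y' t + Φ (y t))]
    have hFl := hFlb (y t)
    have hmnn : 0 ≤ m₀ * |y t| := mul_nonneg hm₀pos.le (abs_nonneg _)
    have hx0 : 0 ≤ L t + 2*C₆ := by nlinarith [sq_nonneg (y' t)]
    have hb2 : y' t^2 ≤ 2*(L t + 2*C₆) := by nlinarith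
    have ha1 : |y t| ≤ (L t + 2*C₆)/(2*m₀) := by
      rw [le_div_iff₀ (by positivity)]
      nlinarith [sq_nonneg (y' t)]
    have ha2 : y t^2 ≤ ((L t + 2*C₆)/(2*m₀))^2 := by
      have := pow_le_pow_left₀ (abs_nonneg (y t)) ha1 2
      rwa [sq_abs] at this
    have hD0 : (0:ℝ) ≤ y 0^2 + y' 0^2 + B^2 := by positivity
    have hmaxD : max (y 0^2 + y' 0^2 + B^2) 0 = y 0^2 + y' 0^2 + B^2 := max_eq_left hD0
    simp only [hmaxD]
    have hy0 : |y 0| ≤ Real.sqrt (y 0^2 + y' 0^2 + B^2) :=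
      Real.abs_le_sqrt (by nlinarith [sq_nonneg (y' 0), sq_nonneg B])
    have hBD : B ≤ Real.sqrt (y 0^2 + y' 0^2 + B^2) :=
      (Real.le_sqrt hB0 hD0).mpr (by nlinarith [sq_nonneg (y 0), sq_nonneg (y' 0)])
    have hL0 : L 0 ≤ 3/2*(y 0^2 + y' 0^2 + B^2) + Sb (Real.sqrt (y 0^2 + y' 0^2 + B^2)) := by
      have e : L 0 = 1/2 * y' 0 ^ 2 + 1/2 * (y' 0 + Φ (y 0)) ^ 2 + 2 * F (y 0) := hLeq 0
      have hsb := hSbbd (Real.sqrt (y 0^2 + y' 0^2 + B^2)) (y 0) hy0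
      have hexp : (y' 0 + Φ (y 0))^2 ≤ 2*y' 0^2 + 2*(Φ (y 0))^2 := by
        nlinarith [sq_nonneg (y' 0 - Φ (y 0))]
      rw [e]
      nlinarith [sq_nonneg (Φ (y 0)), sq_nonneg (y 0), sq_nonneg B]
    have hNB : Nf B ≤ Nf (Real.sqrt (y 0^2 + y' 0^2 + B^2)) := hNm B _ hB0 hBD
    have hLM : L t ≤ max ((3:ℝ)/2*(y 0^2 + y' 0^2 + B^2) +
        Sb (Real.sqrt (y 0^2 + y' 0^2 + B^2)))
        (Nf (Real.sqrt (y 0^2 + y' 0^2 + B^2))) :=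
      le_trans hLt (max_le_max hL0 hNB)
    set LM := max ((3:ℝ)/2*(y 0^2 + y' 0^2 + B^2) +
        Sb (Real.sqrt (y 0^2 + y' 0^2 + B^2)))
        (Nf (Real.sqrt (y 0^2 + y' 0^2 + B^2))) with hLMdef
    clear hLMdef
    clear_value LM
    have hq1 : (L t + 2*C₆)/(2*m₀) ≤ (LM + 2*C₆)/(2*m₀) :=
      div_le_div_of_nonneg_right (by linarith) (by positivity)
    have hq2 : ((L t + 2*C₆)/(2*m₀))^2 ≤ ((LM + 2*C₆)/(2*m₀))^2 :=
      pow_le_pow_left₀ (div_nonneg hx0 (by positivity)) hq1 2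
    linarith
end

section
/- Let y be a bounded C² solution on [0,∞) of y'' + φ(y)y' + f(y) = h(t) with φ(v) ≥ β₀ > 0 and h bounded with bounded derivative. Define S(t) := y'(t)² + 2F(y(t)) - 2h(t)y(t), where F' = f. Then S'(t) = -2φ(y(t))·y'(t)² - 2h'(t)·y(t) for all t ≥ 0; in particular, if moreover ∫₀^∞ |h'(t)|·|y(t)| dt < ∞, then ∫₀^∞ φ(y(t))·y'(t)² dt < ∞. -/
open MeasureTheory

/-- Energy identity and dissipation integral for the damped ODE. -/
theorem stmt3 (φ f F h y y' y'' : ℝ → ℝ)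
    (hφ : ContDiff ℝ 1 φ) (hfC : ContDiff ℝ 1 f)
    (β₀ : ℝ) (hβ₀ : 0 < β₀) (hφpos : ∀ v, φ v ≥ β₀)
    (hF : ∀ v, HasDerivAt F (f v) v)
    (hh : ContDiff ℝ 1 h)
    (Mh : ℝ) (hhb : ∀ t, 0 ≤ t → |h t| ≤ Mh ∧ |deriv h t| ≤ Mh)
    (My : ℝ) (hyb : ∀ t, 0 ≤ t → |y t| ≤ My)
    (hy : ∀ t, 0 ≤ t → HasDerivAt y (y' t) t)
    (hy' : ∀ t, 0 ≤ t → HasDerivAt y' (y'' t) t)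
    (heq : ∀ t, 0 ≤ t → y'' t + φ (y t) * y' t + f (y t) = h t) :
    (∀ t, 0 ≤ t →
      HasDerivAt (fun t => y' t ^ 2 + 2 * F (y t) - 2 * h t * y t)
        (-2 * φ (y t) * y' t ^ 2 - 2 * deriv h t * y t) t) ∧
    (IntegrableOn (fun t => |deriv h t| * |y t|) (Set.Ici (0:ℝ)) →
      IntegrableOn (fun t => φ (y t) * y' t ^ 2) (Set.Ici (0:ℝ))) := by
  have hhd : ∀ t, HasDerivAt h (deriv h t) t := fun t =>
    (hh.differentiable one_ne_zero t).hasDerivAt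
  have part1 : ∀ t, 0 ≤ t →
      HasDerivAt (fun t => y' t ^ 2 + 2 * F (y t) - 2 * h t * y t)
        (-2 * φ (y t) * y' t ^ 2 - 2 * deriv h t * y t) t := by
    intro t ht
    have h1 : HasDerivAt (fun t => y' t ^ 2) (2 * y' t * y'' t) t := by
      have := (hy' t ht).fun_pow 2
      convert this using 1 <;> first | rfl | (push_cast; ring)
    have h2 : HasDerivAt (fun t => 2 * F (y t)) (2 * (f (y t) * y' t)) t :=
      ((hF (y t)).comp t (hy t ht)).const_mul 2
    have h3 : HasDerivAt (fun t => 2 * h t * y t)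
        (2 * (deriv h t * y t + h t * y' t)) t := by
      have h3' := ((hhd t).mul (hy t ht)).const_mul (2:ℝ)
      have he : (fun t => 2 * h t * y t) = fun t => 2 * (h t * y t) := by
        ext s; ring
      rw [he]
      exact h3' 
    have := (h1.add h2).sub h3
    convert this using 1 <;> try rfl
    have hE := heq t ht
    linear_combination (-2 * y' t) * hE
  refine ⟨part1, ?_⟩
  intro hI
  set g : ℝ → ℝ := fun t => φ (y t) * y' t ^ 2 with hg
  set S : ℝ → ℝ := fun t => y' t ^ 2 + 2 * F (y t) - 2 * h t * y t with hS
  have hgnn : ∀ t, 0 ≤ g t := fun t =>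
    mul_nonneg (le_trans hβ₀.le (hφpos (y t))) (sq_nonneg _)
  have hMy : 0 ≤ My := le_trans (abs_nonneg _) (hyb 0 le_rfl)
  have hMh : 0 ≤ Mh := le_trans (abs_nonneg _) (hhb 0 le_rfl).1
  -- bound F on the range of y
  have hFd : Differentiable ℝ F := fun v => (hF v).differentiableAt
  have hFcont : Continuous F := hFd.continuous
  obtain ⟨C, hC⟩ := (isCompact_Icc (a := -My) (b := My)).exists_bound_of_continuousOn
    hFcont.continuousOn
  -- continuity facts
  have hycont : ∀ t, 0 ≤ t → ContinuousAt y t := fun t ht => (hy t ht).continuousAt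
  have hy'cont : ∀ t, 0 ≤ t → ContinuousAt y' t := fun t ht => (hy' t ht).continuousAt
  have hdh : Continuous (deriv h) := hh.continuous_deriv le_rfl
  have hgcont : ∀ t, 0 ≤ t → ContinuousAt g t := fun t ht =>
    ((hφ.continuous.continuousAt.comp (hycont t ht)).mul ((hy'cont t ht).pow 2))
  have hS'cont : ∀ t, 0 ≤ t →
      ContinuousAt (fun t => -2 * φ (y t) * y' t ^ 2 - 2 * deriv h t * y t) t := by
    intro t ht
    exact ((continuousAt_const.mul (hφ.continuous.continuousAt.comp (hycont t ht))).mul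
      ((hy'cont t ht).pow 2)).sub
      ((continuousAt_const.mul hdh.continuousAt).mul (hycont t ht))
  set I : ℝ := ∫ t in Set.Ici (0:ℝ), |deriv h t| * |y t| with hIdef
  set B : ℝ := (S 0 + 2 * C + 2 * Mh * My) / 2 + I with hB
  clear_value S g I B
  -- for each n : ℕ, bound the integral on [0,n]
  have key : ∀ n : ℕ, (∫ t in (0:ℝ)..(n:ℝ), g t) ≤ B := by
    intro n
    have hn : (0:ℝ) ≤ n := n.cast_nonneg
    have hmem : ∀ t ∈ Set.uIcc (0:ℝ) (n:ℝ), 0 ≤ t := by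
      intro t htmem
      rw [Set.uIcc_of_le hn] at htmem
      exact htmem.1
    have hScont : ContinuousOn (fun t => -2 * φ (y t) * y' t ^ 2 - 2 * deriv h t * y t)
        (Set.uIcc (0:ℝ) (n:ℝ)) := fun t htm => (hS'cont t (hmem t htm)).continuousWithinAt
    have hgcontOn : ContinuousOn g (Set.uIcc (0:ℝ) (n:ℝ)) := fun t htm =>
      (hgcont t (hmem t htm)).continuousWithinAt
    have hh'ycontOn : ContinuousOn (fun t => deriv h t * y t) (Set.uIcc (0:ℝ) (n:ℝ)) :=
      fun t htm => (hdh.continuousAt.mul (hycont t (hmem t htm))).continuousWithinAt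
    have hftc : (∫ t in (0:ℝ)..(n:ℝ), (-2 * φ (y t) * y' t ^ 2 - 2 * deriv h t * y t))
        = S n - S 0 := by
      apply intervalIntegral.integral_eq_sub_of_hasDerivAt
      · intro t htm
        exact part1 t (hmem t htm)
      · exact hScont.intervalIntegrable
    have hgint : IntervalIntegrable g volume 0 n := hgcontOn.intervalIntegrable
    have hh'yint : IntervalIntegrable (fun t => deriv h t * y t) volume 0 n :=
      hh'ycontOn.intervalIntegrable
    have hsplit : (∫ t in (0:ℝ)..(n:ℝ), (-2 * φ (y t) * y' t ^ 2 - 2 * deriv h t * y t))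
        = -2 * (∫ t in (0:ℝ)..(n:ℝ), g t) - 2 * ∫ t in (0:ℝ)..(n:ℝ), deriv h t * y t := by
      have e1 : Set.EqOn (fun t => -2 * φ (y t) * y' t ^ 2 - 2 * deriv h t * y t)
          (fun t => -2 * g t - 2 * (deriv h t * y t)) (Set.uIcc (0:ℝ) (n:ℝ)) := by
        intro t _; simp only [hg]; ring
      rw [intervalIntegral.integral_congr e1,
        intervalIntegral.integral_sub (hgint.const_mul (-2)) (hh'yint.const_mul 2),
        intervalIntegral.integral_const_mul, intervalIntegral.integral_const_mul]
    -- bound on the h'y integral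
    have habs : |∫ t in (0:ℝ)..(n:ℝ), deriv h t * y t| ≤ I := by
      have h1 : |∫ t in (0:ℝ)..(n:ℝ), deriv h t * y t|
          ≤ ∫ t in (0:ℝ)..(n:ℝ), |deriv h t * y t| :=
        intervalIntegral.abs_integral_le_integral_abs hn
      have h2 : (∫ t in (0:ℝ)..(n:ℝ), |deriv h t * y t|)
          = ∫ t in Set.Ioc (0:ℝ) (n:ℝ), |deriv h t| * |y t| := by
        rw [intervalIntegral.integral_of_le hn]
        congr 1; ext t; rw [abs_mul]
      have h3 : (∫ t in Set.Ioc (0:ℝ) (n:ℝ), |deriv h t| * |y t|) ≤ I := by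
        rw [hIdef]
        apply setIntegral_mono_set hI
        · exact Filter.Eventually.of_forall fun t => mul_nonneg (abs_nonneg _) (abs_nonneg _)
        · exact Filter.Eventually.of_forall (fun t htm => htm.1.le)
      linarith
    -- lower bound on S n
    have hSn : S n ≥ -2 * C - 2 * Mh * My := by
      have h1 : |y n| ≤ My := hyb n hn
      have h2 : |h n| ≤ Mh := (hhb n hn).1
      have h3 : ‖F (y n)‖ ≤ C := hC (y n) (Set.mem_Icc.mpr (abs_le.mp h1))
      have h4 : |h n * y n| ≤ Mh * My := by
        rw [abs_mul]; exact mul_le_mul h2 h1 (abs_nonneg _) hMh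
      have h5 : -C ≤ F (y n) := neg_le_of_abs_le (by rwa [Real.norm_eq_abs] at h3)
      have h6 := (abs_le.mp h4).2
      have hSeq : S n = y' n ^ 2 + 2 * F (y n) - 2 * (h n * y n) := by simp only [hS]; ring
      have := sq_nonneg (y' n)
      linarith
    have hkey := hftc
    rw [hsplit] at hkey
    have h7 := (abs_le.mp habs).1
    rw [hB]
    linarith
  -- conclude integrability
  rw [integrableOn_Ici_iff_integrableOn_Ioi]
  apply integrableOn_Ioi_of_intervalIntegral_norm_bounded B 0
    (b := fun n : ℕ => (n:ℝ)) (l := Filter.atTop)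
  · intro n
    have hn : (0:ℝ) ≤ n := n.cast_nonneg
    have hcont : ContinuousOn g (Set.Icc (0:ℝ) (n:ℝ)) := fun t htm =>
      (hgcont t htm.1).continuousWithinAt
    exact (hcont.integrableOn_compact isCompact_Icc).mono_set Set.Ioc_subset_Icc_self
  · exact tendsto_natCast_atTop_atTop
  · apply Filter.Eventually.of_forall
    intro n
    have : (∫ t in (0:ℝ)..(n:ℝ), ‖g t‖) = ∫ t in (0:ℝ)..(n:ℝ), g t := by
      apply intervalIntegral.integral_congr
      intro t _
      exact Real.norm_of_nonneg (hgnn t)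
    rw [this]
    exact key n
end

section
/- Let S(t) be a semigroup of Lipschitz maps on a Banach space X (Lipschitz constants locally uniform in t), which is dissipative (there is a bounded absorbing set) and such that for every bounded set B the Kuratowski measure of non-compactness satisfies α(S(t)B) → 0 as t → ∞. Then the ω-limit set ω(B) := ⋂_{τ≥0} closure(⋃_{t≥τ} S(t)B) of any bounded set B is nonempty and compact, and attracts B: dist(S(t)B, ω(B)) → 0 as t → ∞. -/
open Metric Filter

/-- The Kuratowski measure of non-compactness of a set: the infimum of `r > 0`
such that the set can be covered by finitely many balls of radius `r`. -/
noncomputable def kuratowskiMeasure {X : Type*} [MetricSpace X] (s : Set X) : ℝ :=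
  sInf {r : ℝ | 0 < r ∧ ∃ t : Finset X, s ⊆ ⋃ x ∈ t, Metric.ball x r}

/-- If the Kuratowski measure of a bounded set is `< ε`, its closure is covered by
finitely many `ε`-balls. -/
lemma kur_cover {X : Type*} [MetricSpace X] {s : Set X} (hs : Bornology.IsBounded s)
    (c₀ : X) {ε : ℝ} (hε : 0 < ε) (h : kuratowskiMeasure s < ε) :
    ∃ c : Finset X, closure s ⊆ ⋃ x ∈ c, Metric.ball x ε := by
  have hne : {r : ℝ | 0 < r ∧ ∃ t : Finset X, s ⊆ ⋃ x ∈ t, Metric.ball x r}.Nonempty := by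
    obtain ⟨R, hR, hsub⟩ := hs.subset_ball_lt 0 c₀
    exact ⟨R, hR, {c₀}, by simpa using hsub⟩
  obtain ⟨r, ⟨hr0, c, hc⟩, hrε⟩ := exists_lt_of_csInf_lt hne h
  refine ⟨c, ?_⟩
  have hclosed : IsClosed (⋃ x ∈ c, Metric.closedBall x r) :=
    c.finite_toSet.isClosed_biUnion fun x _ => Metric.isClosed_closedBall
  have h1 : closure s ⊆ ⋃ x ∈ c, Metric.closedBall x r :=
    closure_minimal (hc.trans (Set.iUnion₂_mono fun x _ => ball_subset_closedBall)) hclosed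
  exact h1.trans (Set.iUnion₂_mono fun x _ => closedBall_subset_ball hrε)

/-- Abstract attractor-existence criterion: a dissipative Lipschitz semigroup
whose images of bounded sets have Kuratowski measure tending to `0` admits, for
every nonempty bounded set `B`, a nonempty compact attracting `ω`-limit set. -/
theorem stmt17 {X : Type*} [NormedAddCommGroup X] [NormedSpace ℝ X] [CompleteSpace X]
    (S : ℝ → X → X)
    (hS0 : S 0 = id)
    (hSsem : ∀ t s : ℝ, 0 ≤ t → 0 ≤ s → S (t + s) = S t ∘ S s)
    (hLip : ∀ t : ℝ, 0 ≤ t → ∃ L : NNReal, LipschitzWith L (S t))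
    (hdiss : ∃ B₀ : Set X, Bornology.IsBounded B₀ ∧
      ∀ B : Set X, Bornology.IsBounded B → ∃ T : ℝ, ∀ t, T ≤ t → S t '' B ⊆ B₀)
    (hkur : ∀ B : Set X, Bornology.IsBounded B →
      Filter.Tendsto (fun t => kuratowskiMeasure (S t '' B)) Filter.atTop (nhds 0)) :
    ∀ B : Set X, Bornology.IsBounded B → B.Nonempty →
      (⋂ τ ∈ Set.Ici (0:ℝ), closure (⋃ t ∈ Set.Ici τ, S t '' B)).Nonempty ∧
      IsCompact (⋂ τ ∈ Set.Ici (0:ℝ), closure (⋃ t ∈ Set.Ici τ, S t '' B)) ∧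
      ∀ ε : ℝ, 0 < ε → ∃ T : ℝ, ∀ t, T ≤ t → ∀ x ∈ B,
        Metric.infDist (S t x)
          (⋂ τ ∈ Set.Ici (0:ℝ), closure (⋃ t ∈ Set.Ici τ, S t '' B)) < ε := by
  intro B hB hBne
  obtain ⟨x₀, hx₀⟩ := hBne
  obtain ⟨B₀, hB₀, habs⟩ := hdiss
  obtain ⟨T₁, hT₁⟩ := habs B hB
  set T : ℝ := max T₁ 0 with hTdef
  have hT0 : 0 ≤ T := le_max_right _ _
  have hTT₁ : T₁ ≤ T := le_max_left _ _
  set K : ℝ → Set X := fun τ => ⋃ t ∈ Set.Ici τ, S t '' B with hKdef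
  set G : ℕ → Set X := fun n => closure (K (T + n)) with hGdef
  have hKanti : ∀ τ τ' : ℝ, τ ≤ τ' → K τ' ⊆ K τ := by
    intro τ τ' h
    exact Set.biUnion_mono (fun t ht => le_trans h ht) (fun t _ => Set.Subset.refl _)
  have hGmono : ∀ m n : ℕ, m ≤ n → G n ⊆ G m := by
    intro m n h
    exact closure_mono (hKanti _ _ (by
      have : (m : ℝ) ≤ n := Nat.cast_le.2 h
      linarith))
  have hGclosed : ∀ n, IsClosed (G n) := fun n => isClosed_closure
  have hGne : ∀ n : ℕ, (G n).Nonempty := by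
    intro n
    exact ⟨S (T + n) x₀, subset_closure (Set.mem_biUnion (le_refl (T + (n:ℝ))) ⟨x₀, hx₀, rfl⟩)⟩
  -- identification of the ω-limit set with a countable intersection
  have heq : (⋂ τ ∈ Set.Ici (0:ℝ), closure (⋃ t ∈ Set.Ici τ, S t '' B)) = ⋂ n, G n := by
    apply Set.Subset.antisymm
    · refine Set.subset_iInter fun n => ?_
      exact Set.biInter_subset_of_mem (by positivity : (0:ℝ) ≤ T + n)
    · intro x hx
      refine Set.mem_biInter fun τ hτ => ?_
      have hmem := Set.mem_iInter.1 hx ⌈τ⌉₊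
      have hle : τ ≤ T + (⌈τ⌉₊ : ℝ) :=
        le_trans (Nat.le_ceil τ) (le_add_of_nonneg_left hT0)
      exact closure_mono (hKanti τ (T + ⌈τ⌉₊) hle) hmem
  -- covering property of the tails
  have hcov : ∀ ε : ℝ, 0 < ε → ∃ m : ℕ, ∃ c : Finset X, G m ⊆ ⋃ x ∈ c, Metric.ball x ε := by
    intro ε hε
    obtain ⟨a, ha⟩ := eventually_atTop.1 ((hkur B₀ hB₀).eventually (gt_mem_nhds hε))
    set τ : ℝ := max a 0 with hτdef
    have hτ0 : 0 ≤ τ := le_max_right _ _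
    have hbdd : Bornology.IsBounded (S τ '' B₀) := by
      obtain ⟨L, hL⟩ := hLip τ hτ0
      exact hL.isBounded_image hB₀
    obtain ⟨c, hc⟩ := kur_cover hbdd x₀ hε (ha τ (le_max_left _ _))
    refine ⟨⌈τ⌉₊, c, ?_⟩
    have hKsub : K (T + ⌈τ⌉₊) ⊆ S τ '' B₀ := by
      intro z hz
      obtain ⟨t, ht, y, hy, rfl⟩ := by simpa [hKdef] using hz
      have hτceil : τ ≤ (⌈τ⌉₊ : ℝ) := Nat.le_ceil τ
      have ht' : T + (⌈τ⌉₊ : ℝ) ≤ t := ht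
      have hs0 : 0 ≤ t - τ := by linarith
      have hsem := hSsem τ (t - τ) hτ0 hs0
      have htt : τ + (t - τ) = t := by ring
      rw [htt] at hsem
      have hyB₀ : S (t - τ) y ∈ B₀ := hT₁ (t - τ) (by linarith) ⟨y, hy, rfl⟩
      rw [hsem]
      exact ⟨S (t - τ) y, hyB₀, rfl⟩
    exact (closure_mono hKsub).trans hc
  -- key subsequence lemma
  have key : ∀ y : ℕ → X, (∀ n, y n ∈ G n) →
      ∃ p ∈ ⋂ n, G n, ∃ φ : ℕ → ℕ, StrictMono φ ∧
        Tendsto (y ∘ φ) atTop (nhds p) := by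
    intro y hy
    have htb : TotallyBounded (Set.range y) := by
      rw [Metric.totallyBounded_iff]
      intro ε hε
      obtain ⟨m, c, hc⟩ := hcov ε hε
      refine ⟨↑c ∪ y '' Set.Iio m, c.finite_toSet.union ((Set.finite_Iio m).image y), ?_⟩
      rintro _ ⟨n, rfl⟩
      rcases lt_or_ge n m with h | h
      · exact Set.mem_biUnion (Set.mem_union_right _ ⟨n, h, rfl⟩) (mem_ball_self hε)
      · obtain ⟨x, hx, hmem⟩ := by
          simpa using hc (hGmono m n h (hy n))
        exact Set.mem_biUnion (Set.mem_union_left _ hx) hmem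
    have hcpt : IsCompact (closure (Set.range y)) :=
      TotallyBounded.isCompact_of_isClosed htb.closure isClosed_closure
    obtain ⟨p, _, φ, hφ, hlim⟩ :=
      hcpt.tendsto_subseq (fun n => subset_closure (Set.mem_range_self n))
    refine ⟨p, Set.mem_iInter.2 fun m => ?_, φ, hφ, hlim⟩
    refine (hGclosed m).mem_of_tendsto hlim (eventually_atTop.2 ⟨m, fun k hk => ?_⟩)
    exact hGmono m (φ k) (le_trans hk (hφ.le_apply)) (hy (φ k))
  rw [heq]
  obtain ⟨p, hp, _⟩ := key (fun n => (hGne n).choose) (fun n => (hGne n).choose_spec)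
  refine ⟨⟨p, hp⟩, ?_, ?_⟩
  · refine TotallyBounded.isCompact_of_isClosed ?_ (isClosed_iInter hGclosed)
    rw [Metric.totallyBounded_iff]
    intro ε hε
    obtain ⟨m, c, hc⟩ := hcov ε hε
    exact ⟨↑c, c.finite_toSet, (Set.iInter_subset G m).trans hc⟩
  · intro ε hε
    by_contra hcon
    push_neg at hcon
    have hsel : ∀ n : ℕ, ∃ t : ℝ, T + n ≤ t ∧ ∃ x ∈ B, ε ≤ Metric.infDist (S t x) (⋂ n, G n) := by
      intro n
      obtain ⟨t, ht, x, hx, hd⟩ := hcon (T + n)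
      exact ⟨t, ht, x, hx, hd⟩
    choose t ht x hx hd using hsel
    set y : ℕ → X := fun n => S (t n) (x n) with hydef
    have hyG : ∀ n, y n ∈ G n := fun n =>
      subset_closure (Set.mem_biUnion (ht n) ⟨x n, hx n, rfl⟩)
    obtain ⟨p, hp, φ, hφ, hlim⟩ := key y hyG
    have hcont : Tendsto (fun k => Metric.infDist (y (φ k)) (⋂ n, G n)) atTop
        (nhds (Metric.infDist p (⋂ n, G n))) :=
      ((continuous_infDist_pt (⋂ n, G n)).tendsto p).comp hlim
    have h0 : Metric.infDist p (⋂ n, G n) = 0 := Metric.infDist_zero_of_mem hp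
    have : ε ≤ Metric.infDist p (⋂ n, G n) :=
      le_of_tendsto_of_tendsto tendsto_const_nhds hcont
        (Eventually.of_forall fun k => hd (φ k))
    rw [h0] at this
    linarith
end
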